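/- For every ε > 0 there exist constants C_ε, A_ε > 0 such that for all natural numbers n ≥ 1, τ(n) ≤ C_ε · ∑_{d | n, d ≤ n^ε} τ(d)^{A_ε}, where τ is the number-of-divisors function. -/

import Mathlib

open Finset


lemma tau_prod_pow (P : Finset ℕ) (hP : ∀ p ∈ P, p.Prime) (b : ℕ → ℕ) :
    (∏ p ∈ P, p ^ b p).divisors.card = ∏ p ∈ P, (b p + 1) := by
  induction P using Finset.induction_on with
  | empty => simp
  | insert _ _ hq ih =>
    rename_i q s
    rw [Finset.prod_insert hq, Finset.prod_insert hq]
    have hqp : q.Prime := hP q (Finset.mem_insert_self q s)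
    have hcop : (q ^ b q).Coprime (∏ p ∈ s, p ^ b p) := by
      apply Nat.Coprime.prod_right
      intro p hp
      exact (Nat.coprime_primes hqp (hP p (Finset.mem_insert_of_mem hp))).2
        (fun h => hq (h ▸ hp)) |>.pow _ _
    rw [hcop.card_divisors_mul, ih (fun p hp => hP p (Finset.mem_insert_of_mem hp))]
    congr 1
    rw [Nat.divisors_prime_pow hqp]
    simp

lemma coprime_prod_prod {S T : Finset ℕ} (hS : ∀ p ∈ S, p.Prime) (hT : ∀ p ∈ T, p.Prime)
    (hd : Disjoint S T) (b c : ℕ → ℕ) :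
    (∏ p ∈ S, p ^ b p).Coprime (∏ p ∈ T, p ^ c p) := by
  apply Nat.Coprime.prod_left
  intro p hp
  apply Nat.Coprime.prod_right
  intro q hq
  exact ((Nat.coprime_primes (hS p hp) (hT q hq)).2
    (fun h => Finset.disjoint_left.1 hd hp (h ▸ hq))).pow _ _

lemma min_subset_prod (L : Finset ℕ) (w : ℕ → ℕ) (hw : ∀ p ∈ L, 1 ≤ w p)
    (j : ℕ) (hj : j ≤ L.card) :
    ∃ Q ⊆ L, Q.card = j ∧ (∏ p ∈ Q, w p) ^ L.card ≤ (∏ p ∈ L, w p) ^ j := by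
  have hne : (Finset.powersetCard j L).Nonempty := Finset.powersetCard_nonempty.2 hj
  obtain ⟨Q, hQmem, hQmin⟩ := Finset.exists_min_image _ (fun Q => ∏ p ∈ Q, w p) hne
  rw [Finset.mem_powersetCard] at hQmem
  obtain ⟨hQL, hQcard⟩ := hQmem
  refine ⟨Q, hQL, hQcard, ?_⟩
  have key : ∀ p ∈ Q, ∀ q ∈ L \ Q, w p ≤ w q := by
    intro p hp q hq
    by_contra hlt
    push_neg at hlt
    rw [Finset.mem_sdiff] at hq
    have h1 : insert q (Q.erase p) ∈ Finset.powersetCard j L := by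
      rw [Finset.mem_powersetCard]
      constructor
      · intro x hx
        rcases Finset.mem_insert.1 hx with rfl | hx
        · exact hq.1
        · exact hQL (Finset.mem_of_mem_erase hx)
      · rw [Finset.card_insert_of_notMem (fun h => hq.2 (Finset.mem_of_mem_erase h)),
          Finset.card_erase_of_mem hp, hQcard, Nat.sub_add_cancel]
        rw [← hQcard]
        exact Finset.card_pos.2 ⟨p, hp⟩
    have h2 := hQmin _ h1
    rw [Finset.prod_insert (fun h => hq.2 (Finset.mem_of_mem_erase h))] at h2
    have h3 : ∏ x ∈ Q, w x = w p * ∏ x ∈ Q.erase p, w x :=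
      (Finset.mul_prod_erase Q w hp).symm
    have hpos : 1 ≤ ∏ x ∈ Q.erase p, w x :=
      Finset.one_le_prod' (fun x hx => hw x (hQL (Finset.mem_of_mem_erase hx)))
    nlinarith [h2, h3, hpos]
  have hsplit : (∏ p ∈ L, w p) = (∏ p ∈ Q, w p) * ∏ p ∈ L \ Q, w p := by
    rw [← Finset.prod_sdiff hQL, mul_comm]
  have hcard : (L \ Q).card = L.card - j := by
    rw [Finset.card_sdiff_of_subset hQL, hQcard]
  have main : (∏ p ∈ Q, w p) ^ (L.card - j) ≤ (∏ p ∈ L \ Q, w p) ^ j := by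
    calc (∏ p ∈ Q, w p) ^ (L.card - j) = ∏ p ∈ Q, (w p) ^ (L \ Q).card := by
            rw [Finset.prod_pow, hcard]
      _ = ∏ p ∈ Q, ∏ _q ∈ L \ Q, w p := by simp [Finset.prod_const]
      _ ≤ ∏ p ∈ Q, ∏ q ∈ L \ Q, w q := by
            apply Finset.prod_le_prod'
            intro p hp
            apply Finset.prod_le_prod'
            intro q hq
            exact key p hp q hq
      _ = ∏ q ∈ L \ Q, ∏ _p ∈ Q, w q := Finset.prod_comm
      _ = (∏ q ∈ L \ Q, w q) ^ j := by
            simp [Finset.prod_const, Finset.prod_pow, hQcard]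
  calc (∏ p ∈ Q, w p) ^ L.card = (∏ p ∈ Q, w p) ^ j * (∏ p ∈ Q, w p) ^ (L.card - j) := by
        rw [← pow_add, Nat.add_sub_cancel' hj]
    _ ≤ (∏ p ∈ Q, w p) ^ j * (∏ p ∈ L \ Q, w p) ^ j := Nat.mul_le_mul_left _ main
    _ = (∏ p ∈ L, w p) ^ j := by rw [hsplit, mul_pow]

set_option maxHeartbeats 1000000 in
/-- Master lemma: a single small divisor with large `τ(d)^A`. -/
lemma master (ε : ℝ) (hε : 0 < ε) (hε1 : ε ≤ 1) :
    ∃ C A : ℝ, 0 < C ∧ 0 < A ∧ ∀ n : ℕ, 1 ≤ n →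
      ∃ d ∈ n.divisors, (d : ℝ) ≤ (n : ℝ) ^ ε ∧
        (n.divisors.card : ℝ) ≤ C * (d.divisors.card : ℝ) ^ A := by
  set m : ℕ := ⌈2 / ε⌉₊ with hm
  have hm2 : 2 ≤ m := by
    have : (2:ℝ) ≤ 2 / ε := by
      rw [le_div_iff₀ hε]; nlinarith
    exact_mod_cast le_trans (by exact_mod_cast this.trans (Nat.le_ceil _)) le_rfl
  have hmpos : (0:ℝ) < m := by positivity
  have hεm : 2 ≤ ε * m := by
    have h1 : (2/ε : ℝ) ≤ m := Nat.le_ceil _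
    calc (2:ℝ) = ε * (2/ε) := by field_simp
      _ ≤ ε * m := by nlinarith
  have hm1 : (1:ℝ) ≤ m := by exact_mod_cast Nat.one_le_of_lt hm2
  have hLm : (0:ℝ) ≤ Real.logb 2 m := Real.logb_nonneg (by norm_num) hm1
  set A : ℝ := (2/ε) * (Real.logb 2 m + 1) + 2 with hA
  have h2ε : (2:ℝ) ≤ 2/ε := by rw [le_div_iff₀ hε]; nlinarith
  have hApos : 0 < A := by positivity
  have hfac : (0:ℝ) ≤ (2/ε) * Real.logb 2 m :=
    mul_nonneg (by linarith) hLm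
  have hA1 : Real.logb 2 m + 1 ≤ A := by
    rw [hA]
    have := mul_le_mul_of_nonneg_right h2ε (by linarith : (0:ℝ) ≤ Real.logb 2 m + 1)
    nlinarith
  have hA2 : (2/ε) * Real.logb 2 m ≤ A := by rw [hA]; nlinarith
  have hA2' : (2:ℝ) ≤ A := by rw [hA]; nlinarith
  have hmA : (m:ℝ) ≤ 2 ^ (A - 1) := by
    calc (m:ℝ) = 2 ^ Real.logb 2 m := (Real.rpow_logb (by norm_num) (by norm_num) hmpos).symm
      _ ≤ 2 ^ (A - 1) := Real.rpow_le_rpow_of_exponent_le (by norm_num) (by linarith)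
  refine ⟨2 ^ A, A, by positivity, hApos, ?_⟩
  intro n hn
  have hn0 : n ≠ 0 := by omega
  have hn1 : (1:ℝ) ≤ n := by exact_mod_cast hn
  set a : ℕ → ℕ := fun p => n.factorization p with ha
  set P : Finset ℕ := n.primeFactors with hP
  have hPprime : ∀ p ∈ P, p.Prime := fun p hp => Nat.prime_of_mem_primeFactors hp
  have hapos : ∀ p ∈ P, 1 ≤ a p := fun p hp =>
    (Nat.prime_of_mem_primeFactors hp).factorization_pos_of_dvd hn0
      (Nat.dvd_of_mem_primeFactors hp)
  have hnprod : ∏ p ∈ P, p ^ a p = n := by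
    rw [← Nat.prod_factorization_eq_prod_primeFactors (f := fun p k => p ^ k)]
    exact Nat.factorization_prod_pow_eq_self hn0
  set H : Finset ℕ := P.filter (fun p => m ≤ a p) with hH
  set L : Finset ℕ := P.filter (fun p => ¬ m ≤ a p) with hL
  set r : ℕ := L.card with hr
  set j : ℕ := ⌊ε * r / 2⌋₊ with hj
  have hjr : j ≤ r := by
    have : ε * r / 2 ≤ (r:ℝ) := by nlinarith [Nat.cast_nonneg (α := ℝ) r]
    calc j ≤ ⌊(r:ℝ)⌋₊ := Nat.floor_le_floor this
      _ = r := Nat.floor_natCast r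
  obtain ⟨Q, hQL, hQcard, hQprod⟩ := min_subset_prod L (fun p => p ^ a p)
    (fun p hp => Nat.one_le_pow _ _ (hPprime p (Finset.mem_filter.1 hp).1).pos) j hjr
  have hQP : Q ⊆ P := hQL.trans (Finset.filter_subset _ _)
  set dt : ℕ := ∏ p ∈ H, p ^ (a p / m) with hdt
  set ds : ℕ := ∏ p ∈ Q, p ^ a p with hds
  have hHsub : H ⊆ P := Finset.filter_subset _ _
  have hLsub : L ⊆ P := Finset.filter_subset _ _
  have hdisHQ : Disjoint H Q := by
    rw [Finset.disjoint_left]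
    intro p hp hq
    exact (Finset.mem_filter.1 (hQL hq)).2 (Finset.mem_filter.1 hp).2
  have hHQsub : H ∪ Q ⊆ P := Finset.union_subset hHsub hQP
  have hprodH_le : ∏ p ∈ H, p ^ a p ∣ n :=
    hnprod ▸ Finset.prod_dvd_prod_of_subset H P (fun p => p ^ a p) hHsub
  have hprodL_le : ∏ p ∈ L, p ^ a p ≤ n :=
    Nat.le_of_dvd (Nat.pos_of_ne_zero hn0)
      (hnprod ▸ Finset.prod_dvd_prod_of_subset L P (fun p => p ^ a p) hLsub)
  have hdvd : dt * ds ∣ n := by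
    have h1 : dt ∣ ∏ p ∈ H, p ^ a p :=
      Finset.prod_dvd_prod_of_dvd _ _ (fun p _ => pow_dvd_pow p (Nat.div_le_self _ _))
    have h2 : (∏ p ∈ H, p ^ a p) * ds = ∏ p ∈ H ∪ Q, p ^ a p :=
      (Finset.prod_union hdisHQ).symm
    have h3 : ∏ p ∈ H ∪ Q, p ^ a p ∣ n :=
      hnprod ▸ Finset.prod_dvd_prod_of_subset (H ∪ Q) P (fun p => p ^ a p) hHQsub
    exact dvd_trans (h2 ▸ mul_dvd_mul h1 dvd_rfl) h3
  refine ⟨dt * ds, Nat.mem_divisors.2 ⟨hdvd, hn0⟩, ?_, ?_⟩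
  · -- size bound
    have hdtpos : 0 < dt := Finset.prod_pos
      (fun p hp => pow_pos (hPprime p (hHsub hp)).pos _)
    have hdspos : 0 < ds := Finset.prod_pos
      (fun p hp => pow_pos (hPprime p (hQP hp)).pos _)
    have hdtm : dt ^ m ≤ n := by
      calc dt ^ m = ∏ p ∈ H, (p ^ (a p / m)) ^ m := (Finset.prod_pow H m _).symm
        _ = ∏ p ∈ H, p ^ (a p / m * m) := by
              apply Finset.prod_congr rfl; intro p _; rw [← pow_mul]
        _ ≤ ∏ p ∈ H, p ^ a p := Finset.prod_le_prod' (fun p hp =>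
              Nat.pow_le_pow_right (hPprime p (hHsub hp)).pos (Nat.div_mul_le_self _ _))
        _ ≤ n := Nat.le_of_dvd (Nat.pos_of_ne_zero hn0) hprodH_le
    have hnpos : (0:ℝ) < n := by positivity
    have hdt_half : (dt : ℝ) ≤ (n:ℝ) ^ (ε/2) := by
      have h1 : ((dt:ℝ)) ^ (m:ℝ) ≤ (n:ℝ) := by
        rw [Real.rpow_natCast]
        exact_mod_cast hdtm
      have h2 : (dt:ℝ) = (((dt:ℝ)) ^ (m:ℝ)) ^ ((m:ℝ)⁻¹) := by
        rw [← Real.rpow_mul (by positivity), mul_inv_cancel₀ (ne_of_gt hmpos), Real.rpow_one]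
      calc (dt:ℝ) = (((dt:ℝ)) ^ (m:ℝ)) ^ ((m:ℝ)⁻¹) := h2
        _ ≤ (n:ℝ) ^ ((m:ℝ)⁻¹) := Real.rpow_le_rpow (by positivity) h1 (by positivity)
        _ ≤ (n:ℝ) ^ (ε/2) := Real.rpow_le_rpow_of_exponent_le hn1 (by
              rw [← one_div, div_le_div_iff₀ hmpos two_pos]
              nlinarith)
    have hds_half : (ds : ℝ) ≤ (n:ℝ) ^ (ε/2) := by
      rcases Nat.eq_zero_or_pos r with hr0 | hrpos
      · have hQ0 : Q = ∅ := Finset.card_eq_zero.1 (by omega)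
        have : ds = 1 := by rw [hds, hQ0, Finset.prod_empty]
        rw [this]
        simpa using Real.rpow_le_rpow_of_exponent_le hn1 (by positivity : (0:ℝ) ≤ ε/2)
          |>.trans_eq' (by rw [Real.rpow_zero])
      · have hdsr : ds ^ r ≤ n ^ j :=
          hQprod.trans (Nat.pow_le_pow_left hprodL_le j)
        have hrpos' : (0:ℝ) < r := by exact_mod_cast hrpos
        have h1 : ((ds:ℝ)) ^ (r:ℝ) ≤ (n:ℝ) ^ (j:ℝ) := by
          rw [Real.rpow_natCast, Real.rpow_natCast]
          exact_mod_cast hdsr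
        have h2 : (ds:ℝ) = (((ds:ℝ)) ^ (r:ℝ)) ^ ((r:ℝ)⁻¹) := by
          rw [← Real.rpow_mul (by positivity), mul_inv_cancel₀ (ne_of_gt hrpos'), Real.rpow_one]
        have hjhalf : (j:ℝ) * (r:ℝ)⁻¹ ≤ ε/2 := by
          have hjle : (j:ℝ) ≤ ε * r / 2 := Nat.floor_le (div_nonneg (mul_nonneg hε.le (Nat.cast_nonneg _)) two_pos.le)
          have h4 := mul_le_mul_of_nonneg_right hjle (inv_nonneg.2 hrpos'.le)
          calc (j:ℝ) * (r:ℝ)⁻¹ ≤ (ε * r / 2) * (r:ℝ)⁻¹ := h4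
            _ = ε * ((r:ℝ) * (r:ℝ)⁻¹) / 2 := by ring
            _ = ε/2 := by rw [mul_inv_cancel₀ (ne_of_gt hrpos'), mul_one]
        calc (ds:ℝ) = (((ds:ℝ)) ^ (r:ℝ)) ^ ((r:ℝ)⁻¹) := h2
          _ ≤ ((n:ℝ) ^ (j:ℝ)) ^ ((r:ℝ)⁻¹) := Real.rpow_le_rpow (Real.rpow_nonneg (Nat.cast_nonneg _) _) h1 (inv_nonneg.2 hrpos'.le)
          _ = (n:ℝ) ^ ((j:ℝ) * (r:ℝ)⁻¹) := by rw [← Real.rpow_mul (le_of_lt hnpos)]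
          _ ≤ (n:ℝ) ^ (ε/2) := Real.rpow_le_rpow_of_exponent_le hn1 hjhalf
    calc ((dt * ds : ℕ) : ℝ) = (dt:ℝ) * (ds:ℝ) := by push_cast; ring
      _ ≤ (n:ℝ)^(ε/2) * (n:ℝ)^(ε/2) := by
          apply mul_le_mul hdt_half hds_half (by positivity) (by positivity)
      _ = (n:ℝ)^ε := by rw [← Real.rpow_add hnpos]; ring_nf
  · -- tau bound
    have hτn : n.divisors.card = (∏ p ∈ H, (a p + 1)) * ∏ p ∈ L, (a p + 1) := by
      rw [Nat.card_divisors hn0,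
        ← Finset.prod_filter_mul_prod_filter_not P (fun p => m ≤ a p) (fun p => a p + 1)]
    have hτd : (dt * ds).divisors.card
        = (∏ p ∈ H, (a p / m + 1)) * ∏ p ∈ Q, (a p + 1) := by
      have hcop : dt.Coprime ds := coprime_prod_prod (fun p hp => hPprime p (hHsub hp))
        (fun p hp => hPprime p (hQP hp)) hdisHQ _ _
      rw [hcop.card_divisors_mul, hdt, hds,
        tau_prod_pow H (fun p hp => hPprime p (hHsub hp)) _,
        tau_prod_pow Q (fun p hp => hPprime p (hQP hp)) _]
    -- pointwise bound on H
    have hHbound : (∏ p ∈ H, ((a p : ℝ) + 1))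
        ≤ ((∏ p ∈ H, (a p / m + 1) : ℕ) : ℝ) ^ A := by
      have hpt : ∀ p ∈ H, ((a p : ℝ) + 1) ≤ (((a p / m : ℕ) : ℝ) + 1) ^ A := by
        intro p hp
        have hmle : m ≤ a p := (Finset.mem_filter.1 hp).2
        have hf1 : 1 ≤ a p / m := (Nat.one_le_div_iff (by omega)).2 hmle
        have hlt : a p < m * (a p / m + 1) := Nat.lt_mul_div_succ _ (by omega)
        have h1 : ((a p : ℝ) + 1) ≤ (m:ℝ) * (((a p / m : ℕ):ℝ) + 1) := by
          exact_mod_cast Nat.succ_le_of_lt hlt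
        have hfc : (2:ℝ) ≤ ((a p / m : ℕ):ℝ) + 1 := by exact_mod_cast Nat.succ_le_succ hf1
        have hfpos : (0:ℝ) < ((a p / m : ℕ):ℝ) + 1 := by positivity
        have h3 : (2:ℝ)^(A-1) ≤ (((a p / m : ℕ):ℝ) + 1)^(A-1) :=
          Real.rpow_le_rpow (by norm_num) hfc (by linarith)
        have h4 : (((a p / m : ℕ):ℝ) + 1)^(A-1) * (((a p / m : ℕ):ℝ) + 1)
            = (((a p / m : ℕ):ℝ) + 1) ^ A := by
          nth_rewrite 2 [← Real.rpow_one (((a p / m : ℕ):ℝ) + 1)]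
          rw [← Real.rpow_add hfpos]
          norm_num
        calc ((a p : ℝ) + 1) ≤ (m:ℝ) * (((a p / m : ℕ):ℝ) + 1) := h1
          _ ≤ 2^(A-1) * (((a p / m : ℕ):ℝ) + 1) :=
              mul_le_mul_of_nonneg_right hmA (by positivity)
          _ ≤ (((a p / m : ℕ):ℝ) + 1)^(A-1) * (((a p / m : ℕ):ℝ) + 1) :=
              mul_le_mul_of_nonneg_right h3 (by positivity)
          _ = (((a p / m : ℕ):ℝ) + 1) ^ A := h4
      calc (∏ p ∈ H, ((a p : ℝ) + 1)) ≤ ∏ p ∈ H, (((a p / m : ℕ):ℝ) + 1) ^ A :=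
            Finset.prod_le_prod (fun p _ => by positivity) hpt
        _ = (∏ p ∈ H, (((a p / m : ℕ):ℝ) + 1)) ^ A :=
            Real.finset_prod_rpow _ _ (fun p _ => by positivity) A
        _ = ((∏ p ∈ H, (a p / m + 1) : ℕ) : ℝ) ^ A := by
            rw [show ((∏ p ∈ H, (a p / m + 1) : ℕ) : ℝ)
              = ∏ p ∈ H, (((a p / m : ℕ):ℝ) + 1) by push_cast; rfl]
    -- bound on L
    have h5 : ∏ p ∈ L, (a p + 1) ≤ m ^ r := by
      calc ∏ p ∈ L, (a p + 1) ≤ ∏ _p ∈ L, m := Finset.prod_le_prod'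
            (fun p hp => by have := (Finset.mem_filter.1 hp).2; omega)
        _ = m ^ r := Finset.prod_const m
    have h6 : 2 ^ j ≤ ∏ p ∈ Q, (a p + 1) := by
      calc (2:ℕ) ^ j = ∏ _p ∈ Q, 2 := by rw [Finset.prod_const, hQcard]
        _ ≤ ∏ p ∈ Q, (a p + 1) := Finset.prod_le_prod'
            (fun p hp => by have := hapos p (hQP hp); omega)
    have hlogr : Real.logb 2 m * r ≤ A * j + A := by
      have hfl : ε * r / 2 < (j:ℝ) + 1 := Nat.lt_floor_add_one _
      have hl0 : (ε/2) * ((2/ε) * Real.logb 2 m) = Real.logb 2 m := by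
        field_simp
      have hl1 : Real.logb 2 m ≤ A * (ε / 2) := by
        rw [← hl0]
        nlinarith [mul_le_mul_of_nonneg_left hA2 (by linarith : (0:ℝ) ≤ ε/2)]
      calc Real.logb 2 m * r ≤ (A*(ε/2))*r :=
            mul_le_mul_of_nonneg_right hl1 (Nat.cast_nonneg r)
        _ = A*(ε*r/2) := by ring
        _ ≤ A*((j:ℝ)+1) := mul_le_mul_of_nonneg_left hfl.le hApos.le
        _ = A*j+A := by ring
    have hmr : ((m:ℝ)) ^ (r:ℝ) ≤ 2 ^ (A * j + A) := by
      have hm2' : (m:ℝ) = 2 ^ Real.logb 2 m :=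
        (Real.rpow_logb two_pos (by norm_num) hmpos).symm
      calc (m:ℝ)^(r:ℝ) = (2 ^ Real.logb 2 m)^(r:ℝ) := by rw [← hm2']
        _ = 2 ^ (Real.logb 2 m * r) := by rw [← Real.rpow_mul (by norm_num)]
        _ ≤ 2 ^ (A * j + A) := Real.rpow_le_rpow_of_exponent_le (by norm_num) hlogr
    have h2jA : (2:ℝ) ^ (A * (j:ℝ)) = (((2^j : ℕ)):ℝ) ^ A := by
      rw [mul_comm, Real.rpow_mul (by norm_num : (0:ℝ) ≤ 2), Real.rpow_natCast]
      norm_num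
    have hLbound : (∏ p ∈ L, ((a p : ℝ) + 1))
        ≤ 2 ^ A * ((∏ p ∈ Q, (a p + 1) : ℕ) : ℝ) ^ A := by
      calc (∏ p ∈ L, ((a p : ℝ) + 1)) = ((∏ p ∈ L, (a p + 1) : ℕ) : ℝ) := by push_cast; exact Finset.prod_congr rfl (fun p _ => by ring)
        _ ≤ ((m^r : ℕ):ℝ) := by exact_mod_cast h5
        _ = (m:ℝ)^(r:ℝ) := by rw [Real.rpow_natCast]; push_cast; ring
        _ ≤ 2^(A * j + A) := hmr
        _ = 2^A * 2^(A * (j:ℝ)) := by rw [Real.rpow_add two_pos]; ring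
        _ = 2^A * (((2^j:ℕ)):ℝ)^A := by rw [h2jA]
        _ ≤ 2^A * ((∏ p ∈ Q, (a p + 1) : ℕ) : ℝ)^A := by
            apply mul_le_mul_of_nonneg_left _ (by positivity)
            exact Real.rpow_le_rpow (by positivity) (by exact_mod_cast h6) hApos.le
    have hXnn : (0:ℝ) ≤ ((∏ p ∈ H, (a p / m + 1) : ℕ) : ℝ) ^ A := by positivity
    calc (n.divisors.card : ℝ)
        = (∏ p ∈ H, ((a p : ℝ) + 1)) * (∏ p ∈ L, ((a p : ℝ) + 1)) := by
          rw [hτn]; push_cast; ring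
      _ ≤ (((∏ p ∈ H, (a p / m + 1) : ℕ) : ℝ) ^ A)
          * (2 ^ A * ((∏ p ∈ Q, (a p + 1) : ℕ) : ℝ) ^ A) := by
          apply mul_le_mul hHbound hLbound (Finset.prod_nonneg (fun p _ => by positivity)) hXnn
      _ = 2 ^ A * (((∏ p ∈ H, (a p / m + 1) : ℕ) : ℝ)
          * ((∏ p ∈ Q, (a p + 1) : ℕ) : ℝ)) ^ A := by
          rw [Real.mul_rpow (by positivity) (by positivity)]; ring
      _ = 2 ^ A * (((dt * ds).divisors.card : ℕ) : ℝ) ^ A := by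
          rw [hτd]; push_cast; ring

/-- Landreau's inequality: for every `ε > 0` there are constants `C_ε, A_ε > 0` with
`τ(n) ≤ C_ε ∑_{d ∣ n, d ≤ n^ε} τ(d)^{A_ε}` for all `n ≥ 1`. -/
theorem stmt3 (ε : ℝ) (hε : 0 < ε) :
    ∃ C A : ℝ, 0 < C ∧ 0 < A ∧ ∀ n : ℕ, 1 ≤ n →
      (n.divisors.card : ℝ) ≤
        C * ∑ d ∈ n.divisors.filter (fun d : ℕ => (d : ℝ) ≤ (n : ℝ) ^ ε),
              (d.divisors.card : ℝ) ^ A := by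
  obtain ⟨C, A, hC, hA, h⟩ := master (min ε 1) (lt_min hε one_pos) (min_le_right _ _)
  refine ⟨C, A, hC, hA, ?_⟩
  intro n hn
  obtain ⟨d, hd, hdle, hτ⟩ := h n hn
  have hn1 : (1:ℝ) ≤ n := by exact_mod_cast hn
  have hdle' : (d:ℝ) ≤ (n:ℝ) ^ ε :=
    hdle.trans (Real.rpow_le_rpow_of_exponent_le hn1 (min_le_left _ _))
  have hmem : d ∈ n.divisors.filter (fun d : ℕ => (d:ℝ) ≤ (n:ℝ) ^ ε) :=
    Finset.mem_filter.2 ⟨hd, hdle'⟩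
  have hsum : ((d.divisors.card : ℝ)) ^ A
      ≤ ∑ e ∈ n.divisors.filter (fun e : ℕ => (e:ℝ) ≤ (n:ℝ) ^ ε), ((e.divisors.card : ℝ)) ^ A :=
    Finset.single_le_sum (f := fun e : ℕ => ((e.divisors.card : ℝ)) ^ A)
      (fun i _ => Real.rpow_nonneg (by positivity) A) hmem
  calc (n.divisors.card : ℝ) ≤ C * ((d.divisors.card : ℝ)) ^ A := hτ
    _ ≤ C * ∑ e ∈ n.divisors.filter (fun e : ℕ => (e:ℝ) ≤ (n:ℝ) ^ ε),
          ((e.divisors.card : ℝ)) ^ A := mul_le_mul_of_nonneg_left hsum hC.le
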